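/- Let A be a real n×p matrix and let H be a real n×p matrix with HᵀH = I_p. Then tr(Hᵀ A) ≤ tr(√(Aᵀ A)), where √(Aᵀ A) denotes the positive semidefinite square root of the positive semidefinite matrix Aᵀ A. (The right-hand side equals the sum of the singular values of A.) -/

import Mathlib

open Matrix

open scoped ComplexOrder in
/-- The positive semidefinite square root, as defined in the older Mathlib
(`Matrix.PosSemidef.sqrt`, since removed). -/
noncomputable def Matrix.PosSemidef.sqrt {n : Type*} [Fintype n] [DecidableEq n]
    {𝕜 : Type*} [RCLike 𝕜] {A : Matrix n n 𝕜} (hA : A.PosSemidef) : Matrix n n 𝕜 :=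
  hA.1.eigenvectorUnitary.1 * diagonal ((↑) ∘ Real.sqrt ∘ hA.1.eigenvalues) *
  (star hA.1.eigenvectorUnitary : Matrix n n 𝕜)


open Matrix Finset

/-- For any real `n×p` matrix `A` and any `H` with orthonormal columns (`Hᵀ H = I_p`),
`tr(Hᵀ A) ≤ tr(√(Aᵀ A))`, where `√(Aᵀ A)` is the positive semidefinite square root
of the positive semidefinite matrix `Aᵀ A`. -/
theorem trace_semiorthogonal_le_trace_sqrt {n p : ℕ}
    (A H : Matrix (Fin n) (Fin p) ℝ) (hH : Hᵀ * H = 1)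
    (hS : (Aᵀ * A).PosSemidef) :
    (Hᵀ * A).trace ≤ hS.sqrt.trace := by
  classical
  set U : Matrix (Fin p) (Fin p) ℝ := (hS.1.eigenvectorUnitary : Matrix (Fin p) (Fin p) ℝ)
    with hUdef
  have hU2 : U * star U = 1 := Matrix.mem_unitaryGroup_iff.mp hS.1.eigenvectorUnitary.2
  have hU1 : star U * U = 1 := Matrix.mem_unitaryGroup_iff'.mp hS.1.eigenvectorUnitary.2
  -- columns of U
  set q : Fin p → (Fin p → ℝ) := fun i k => U k i with hq
  -- each column is a unit vector
  have hqq : ∀ i, q i ⬝ᵥ q i = 1 := by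
    intro i
    have := congrFun (congrFun hU1 i) i
    simpa [Matrix.mul_apply, Matrix.one_apply, dotProduct, Matrix.star_apply,
      mul_comm] using this
  -- each column is an eigenvector of AᵀA
  have hEig : ∀ i, (Aᵀ * A) *ᵥ q i = hS.1.eigenvalues i • q i := by
    intro i
    have : q i = ⇑(hS.1.eigenvectorBasis i) := by
      funext k
      rw [hq]
      exact hS.1.eigenvectorUnitary_apply k i
    rw [this]
    exact hS.1.mulVec_eigenvectorBasis i
  -- norm squared of A *ᵥ q i
  have hAq : ∀ i, (A *ᵥ q i) ⬝ᵥ (A *ᵥ q i) = hS.1.eigenvalues i := by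
    intro i
    have : q i ⬝ᵥ ((Aᵀ * A) *ᵥ q i) = (A *ᵥ q i) ⬝ᵥ (A *ᵥ q i) := by
      rw [← Matrix.mulVec_mulVec, Matrix.dotProduct_mulVec, Matrix.vecMul_transpose]
    rw [← this, hEig i, dotProduct_smul, smul_eq_mul, hqq i, mul_one]
  -- norm squared of H *ᵥ q i
  have hHq : ∀ i, (H *ᵥ q i) ⬝ᵥ (H *ᵥ q i) = 1 := by
    intro i
    have : q i ⬝ᵥ ((Hᵀ * H) *ᵥ q i) = (H *ᵥ q i) ⬝ᵥ (H *ᵥ q i) := by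
      rw [← Matrix.mulVec_mulVec, Matrix.dotProduct_mulVec, Matrix.vecMul_transpose]
    rw [← this, hH, Matrix.one_mulVec, hqq i]
  -- trace of Hᵀ A as a sum over the eigenbasis
  have htr : (Hᵀ * A).trace = ∑ i, (H *ᵥ q i) ⬝ᵥ (A *ᵥ q i) := by
    have h1 : (Hᵀ * A).trace = (star U * (Hᵀ * A) * U).trace := by
      rw [Matrix.trace_mul_cycle, ← Matrix.mul_assoc, hU2, Matrix.one_mul]
    rw [h1]
    unfold Matrix.trace
    refine Finset.sum_congr rfl fun i _ => ?_
    have key : (star U * (Hᵀ * A) * U) i i = q i ⬝ᵥ ((Hᵀ * A) *ᵥ q i) := by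
      simp only [Matrix.mul_apply, Matrix.star_apply, star_trivial, dotProduct,
        Matrix.mulVec, Finset.sum_mul, Finset.mul_sum]
      rw [Finset.sum_comm]
      refine Finset.sum_congr rfl fun a _ => Finset.sum_congr rfl fun b _ => ?_
      simp only [hq, Finset.sum_mul, Finset.mul_sum]
      exact Finset.sum_congr rfl fun k _ => by ring
    have key2 : q i ⬝ᵥ ((Hᵀ * A) *ᵥ q i) = (H *ᵥ q i) ⬝ᵥ (A *ᵥ q i) := by
      rw [← Matrix.mulVec_mulVec, Matrix.dotProduct_mulVec, Matrix.vecMul_transpose]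
    simpa [Matrix.diag_apply] using key.trans key2
  -- trace of the square root
  have hsqrt : hS.sqrt.trace = ∑ i, Real.sqrt (hS.1.eigenvalues i) := by
    rw [Matrix.PosSemidef.sqrt, ← hUdef, Matrix.trace_mul_cycle, hU1, Matrix.one_mul,
      Matrix.trace_diagonal]
    simp
  rw [htr, hsqrt]
  refine Finset.sum_le_sum fun i _ => ?_
  -- Cauchy–Schwarz for each term
  have hcs := Finset.sum_mul_sq_le_sq_mul_sq Finset.univ (fun k => (H *ᵥ q i) k)
    (fun k => (A *ᵥ q i) k)
  have h1 : ∑ k, ((H *ᵥ q i) k) ^ 2 = 1 := by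
    simpa [dotProduct, pow_two] using hHq i
  have h2 : ∑ k, ((A *ᵥ q i) k) ^ 2 = hS.1.eigenvalues i := by
    simpa [dotProduct, pow_two] using hAq i
  rw [h1, h2, one_mul] at hcs
  calc (H *ᵥ q i) ⬝ᵥ (A *ᵥ q i) = ∑ k, (H *ᵥ q i) k * (A *ᵥ q i) k := rfl
    _ ≤ |∑ k, (H *ᵥ q i) k * (A *ᵥ q i) k| := le_abs_self _
    _ = Real.sqrt ((∑ k, (H *ᵥ q i) k * (A *ᵥ q i) k) ^ 2) := (Real.sqrt_sq_eq_abs _).symm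
    _ ≤ Real.sqrt (hS.1.eigenvalues i) := Real.sqrt_le_sqrt hcs
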